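/- Let (ξ_n)_{n ∈ ℤ} be a sequence of independent standard Gaussian random variables and set W_n = ξ_n + ξ_{n+1}. Then almost surely (1/N) Σ_{n=1}^N (−1)^n (ξ_{n+1} + ξ_{−n}) → 0 as N → ∞, and consequently one has the almost sure identity W_0 = − lim_{N→∞} (1/N) Σ_{n=1}^N (−1)^n (N + 1 − n)(W_n + W_{−n}). In particular, W_0 is almost surely determined by the values W_n for n ≠ 0. -/

import Mathlib

open MeasureTheory ProbabilityTheory Filter Real

/-- Let `(ξ_n)_{n ∈ ℤ}` be i.i.d. standard Gaussian random variables and `W_n = ξ_n + ξ_{n+1}`.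
Then almost surely `(1/N) ∑_{n=1}^N (−1)^n (ξ_{n+1} + ξ_{−n}) → 0` as `N → ∞` and,
consequently, almost surely
`W_0 = − lim_{N→∞} (1/N) ∑_{n=1}^N (−1)^n (N+1−n)(W_n + W_{−n})`;
in particular `W_0` is almost surely determined by the `W_n`, `n ≠ 0`. -/

lemma integrable_id_gaussianReal01 : Integrable id (gaussianReal 0 1) := by
  rw [gaussianReal_of_var_ne_zero 0 one_ne_zero,
    integrable_withDensity_iff (measurable_gaussianPDF 0 1)
      (Filter.Eventually.of_forall fun x => ENNReal.ofReal_lt_top)]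
  have h : (fun x : ℝ => id x * (gaussianPDF 0 1 x).toReal)
      = fun x => (√(2 * π))⁻¹ * (x * rexp (-(2⁻¹) * x ^ 2)) := by
    funext x
    rw [gaussianPDF, ENNReal.toReal_ofReal (gaussianPDFReal_nonneg 0 1 x), gaussianPDFReal]
    simp only [id_eq]
    push_cast
    ring_nf
  rw [h]
  exact (integrable_mul_exp_neg_mul_sq (by norm_num)).const_mul _

lemma lemA (f : ℤ → ℝ) (N : ℕ) :
    ∑ n ∈ Finset.Icc 1 N, (-1 : ℝ) ^ n *
        (f n + f ((n : ℤ) + 1) + f (-(n : ℤ)) + f (-(n : ℤ) + 1))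
      = (-1 : ℝ) ^ N * (f ((N : ℤ) + 1) + f (-(N : ℤ))) - (f 0 + f 1) := by
  induction N with
  | zero => simp; ring
  | succ N ih =>
    rw [Finset.sum_Icc_succ_top (by omega), ih]
    have h1 : ((N : ℤ) + 1 : ℤ) = ((N + 1 : ℕ) : ℤ) := by push_cast; ring
    have h2 : (-(N : ℤ) : ℤ) = (-((N + 1 : ℕ) : ℤ) + 1 : ℤ) := by push_cast; ring
    rw [h1, h2]
    push_cast
    ring

lemma lemB (f : ℤ → ℝ) (N : ℕ) :
    ∑ n ∈ Finset.Icc 1 N, (-1 : ℝ) ^ n * ((N : ℝ) + 1 - (n : ℝ)) *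
        (f n + f ((n : ℤ) + 1) + f (-(n : ℤ)) + f (-(n : ℤ) + 1))
      = ∑ n ∈ Finset.Icc 1 N, (-1 : ℝ) ^ n * (f ((n : ℤ) + 1) + f (-(n : ℤ)))
        - (N : ℝ) * (f 0 + f 1) := by
  induction N with
  | zero => simp
  | succ N ih =>
    have split : ∑ n ∈ Finset.Icc 1 (N + 1), (-1 : ℝ) ^ n * (((N + 1 : ℕ) : ℝ) + 1 - (n : ℝ)) *
          (f n + f ((n : ℤ) + 1) + f (-(n : ℤ)) + f (-(n : ℤ) + 1))
        = ∑ n ∈ Finset.Icc 1 N, (-1 : ℝ) ^ n * ((N : ℝ) + 1 - (n : ℝ)) *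
            (f n + f ((n : ℤ) + 1) + f (-(n : ℤ)) + f (-(n : ℤ) + 1))
          + ∑ n ∈ Finset.Icc 1 (N + 1), (-1 : ℝ) ^ n *
            (f n + f ((n : ℤ) + 1) + f (-(n : ℤ)) + f (-(n : ℤ) + 1)) := by
      rw [Finset.sum_Icc_succ_top (a := 1) (b := N) (by omega)
        (f := fun n => (-1 : ℝ) ^ n *
            (f n + f ((n : ℤ) + 1) + f (-(n : ℤ)) + f (-(n : ℤ) + 1)))]
      rw [Finset.sum_Icc_succ_top (by omega), ← add_assoc, ← Finset.sum_add_distrib]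
      congr 1
      · apply Finset.sum_congr rfl
        intro n hn
        push_cast
        ring
      · push_cast
        ring
    rw [split, ih, lemA, Finset.sum_Icc_succ_top (by omega)]
    push_cast
    ring

theorem gaussian_moving_average_determined
    {Ω : Type*} [MeasurableSpace Ω] (P : Measure Ω) [IsProbabilityMeasure P]
    (ξ : ℤ → Ω → ℝ) (hmeas : ∀ i, Measurable (ξ i))
    (hindep : iIndepFun ξ P)
    (hgauss : ∀ i, P.map (ξ i) = gaussianReal 0 1)
    (W : ℤ → Ω → ℝ) (hW : ∀ n ω, W n ω = ξ n ω + ξ (n + 1) ω) :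
    ∀ᵐ ω ∂P,
      Tendsto (fun N : ℕ => (1 / (N : ℝ)) * ∑ n ∈ Finset.Icc 1 N,
          (-1 : ℝ) ^ n * (ξ ((n : ℤ) + 1) ω + ξ (-(n : ℤ)) ω)) atTop (nhds 0) ∧
      Tendsto (fun N : ℕ => -((1 / (N : ℝ)) * ∑ n ∈ Finset.Icc 1 N,
          (-1 : ℝ) ^ n * ((N : ℝ) + 1 - (n : ℝ)) * (W (n : ℤ) ω + W (-(n : ℤ)) ω)))
        atTop (nhds (W 0 ω)) := by
  set X : ℕ → Ω → ℝ := fun i ω =>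
    (-1 : ℝ) ^ (i + 1) * ξ ((i : ℤ) + 2) ω + (-1 : ℝ) ^ (i + 1) * ξ (-(i : ℤ) - 1) ω with hX
  set base : Ω → ℝ := fun ω => ξ 2 ω + ξ (-1) ω with hbase
  have hxi_int : ∀ i, Integrable (ξ i) P := by
    intro i
    have h0 : Integrable id (P.map (ξ i)) := by rw [hgauss i]; exact integrable_id_gaussianReal01
    exact (integrable_map_measure h0.aestronglyMeasurable (hmeas i).aemeasurable).mp h0
  have pair_law : ∀ (ε : ℝ), (ε = 1 ∨ ε = -1) → ∀ (a b : ℤ), a ≠ b →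
      IdentDistrib (fun ω => ε * ξ a ω + ε * ξ b ω) base P P := by
    intro ε hε a b hab
    have hmeas' : ∀ i : ℤ, Measurable (fun ω => ε * ξ i ω) := fun i => (hmeas i).const_mul ε
    have hmap : ∀ i : ℤ, P.map (fun ω => ε * ξ i ω) = gaussianReal 0 1 := by
      intro i
      rcases hε with h | h
      · simp [h, hgauss i]
      · rw [h]
        have heq : (fun ω => (-1 : ℝ) * ξ i ω) = (fun x : ℝ => (-1) * x) ∘ ξ i := rfl
        rw [heq, ← Measure.map_map (measurable_const_mul _) (hmeas i), hgauss i,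
          gaussianReal_map_const_mul]
        norm_num
    have hind1 : IndepFun (fun ω => ε * ξ a ω) (fun ω => ε * ξ b ω) P :=
      (hindep.indepFun hab).comp (measurable_const_mul ε) (measurable_const_mul ε)
    have hind2 : IndepFun (ξ 2) (ξ (-1)) P := hindep.indepFun (by decide)
    have h1 := (indepFun_iff_map_prod_eq_prod_map_map (hmeas' a).aemeasurable
      (hmeas' b).aemeasurable).mp hind1
    have h2 := (indepFun_iff_map_prod_eq_prod_map_map (hmeas 2).aemeasurable
      (hmeas (-1)).aemeasurable).mp hind2
    have hpair : IdentDistrib (fun ω => (ε * ξ a ω, ε * ξ b ω))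
        (fun ω => (ξ 2 ω, ξ (-1) ω)) P P :=
      ⟨((hmeas' a).prodMk (hmeas' b)).aemeasurable,
       ((hmeas 2).prodMk (hmeas (-1))).aemeasurable,
       by rw [h1, h2, hmap a, hmap b, hgauss 2, hgauss (-1)]⟩
    exact hpair.comp measurable_add
  have hsign : ∀ i : ℕ, ((-1 : ℝ) ^ (i + 1) = 1 ∨ (-1 : ℝ) ^ (i + 1) = -1) := by
    intro i
    rcases Nat.even_or_odd (i + 1) with h | h
    · exact Or.inl h.neg_one_pow
    · exact Or.inr h.neg_one_pow
  have hXlaw : ∀ i : ℕ, IdentDistrib (X i) base P P := fun i =>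
    pair_law _ (hsign i) ((i : ℤ) + 2) (-(i : ℤ) - 1) (by omega)
  have hident : ∀ i : ℕ, IdentDistrib (X i) (X 0) P P :=
    fun i => (hXlaw i).trans (hXlaw 0).symm
  have hX_indep : Pairwise (Function.onFun (IndepFun · · P) X) := by
    intro i j hij
    have h := hindep.indepFun_prodMk_prodMk hmeas ((i : ℤ) + 2) (-(i : ℤ) - 1)
      ((j : ℤ) + 2) (-(j : ℤ) - 1) (by omega) (by omega) (by omega) (by omega)
    exact h.comp ((measurable_fst.const_mul _).add (measurable_snd.const_mul _))
      ((measurable_fst.const_mul _).add (measurable_snd.const_mul _))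
  have hbase_int : Integrable base P := (hxi_int 2).add (hxi_int (-1))
  have hint : Integrable (X 0) P := (hXlaw 0).symm.integrable_iff.mp hbase_int
  have hmean : P[X 0] = 0 := by
    have e1 : P[X 0] = ∫ ω, base ω ∂P := (hXlaw 0).integral_eq
    have e2 : X 0 = fun ω => -(base ω) := by
      funext ω
      simp [hX, hbase]
      ring
    rw [e2] at e1
    rw [integral_neg] at e1
    have h0 : ∫ ω, base ω ∂P = 0 := by linarith
    rw [e2, integral_neg, h0, neg_zero]
  have key := strong_law_ae_real X hint hX_indep hident
  rw [hmean] at key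
  filter_upwards [key] with ω hω
  have hsum : ∀ N : ℕ, ∑ n ∈ Finset.Icc 1 N,
      (-1 : ℝ) ^ n * (ξ ((n : ℤ) + 1) ω + ξ (-(n : ℤ)) ω) = ∑ i ∈ Finset.range N, X i ω := by
    intro N
    induction N with
    | zero => simp
    | succ N ih =>
      rw [Finset.sum_Icc_succ_top (by omega), Finset.sum_range_succ, ih]
      congr 1
      simp only [hX]
      push_cast
      ring_nf
  have h1 : Tendsto (fun N : ℕ => (1 / (N : ℝ)) * ∑ n ∈ Finset.Icc 1 N,
      (-1 : ℝ) ^ n * (ξ ((n : ℤ) + 1) ω + ξ (-(n : ℤ)) ω)) atTop (nhds 0) := by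
    have heq : (fun N : ℕ => (1 / (N : ℝ)) * ∑ n ∈ Finset.Icc 1 N,
        (-1 : ℝ) ^ n * (ξ ((n : ℤ) + 1) ω + ξ (-(n : ℤ)) ω))
        = fun N : ℕ => (∑ i ∈ Finset.range N, X i ω) / N := by
      funext N
      rw [hsum N, one_div, inv_mul_eq_div]
    rw [heq]
    exact hω
  refine ⟨h1, ?_⟩
  have h2 : Tendsto (fun N : ℕ => W 0 ω - (1 / (N : ℝ)) * ∑ n ∈ Finset.Icc 1 N,
      (-1 : ℝ) ^ n * (ξ ((n : ℤ) + 1) ω + ξ (-(n : ℤ)) ω)) atTop (nhds (W 0 ω)) := by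
    simpa using tendsto_const_nhds.sub h1
  apply h2.congr'
  filter_upwards [eventually_ge_atTop 1] with N hN
  have hWsum : ∑ n ∈ Finset.Icc 1 N,
      (-1 : ℝ) ^ n * ((N : ℝ) + 1 - (n : ℝ)) * (W (n : ℤ) ω + W (-(n : ℤ)) ω)
      = ∑ n ∈ Finset.Icc 1 N, (-1 : ℝ) ^ n * (ξ ((n : ℤ) + 1) ω + ξ (-(n : ℤ)) ω)
        - (N : ℝ) * (ξ 0 ω + ξ 1 ω) := by
    rw [← lemB (fun i => ξ i ω) N]
    apply Finset.sum_congr rfl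
    intro n hn
    rw [hW, hW]
    ring
  rw [hWsum, hW 0 ω]
  have hN' : (N : ℝ) ≠ 0 := by
    have : 0 < N := hN
    positivity
  field_simp
  ring
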